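/- Let V be a real Hilbert space, V_n a finite-dimensional subspace and W_m a complete subspace of V with β := β(V_n, W_m) > 0, and let u*(·) be the PBDW reconstruction map on W_m. Then for every u ∈ V and every noise element η ∈ W_m with ‖η‖ ≤ ε_noise, the reconstruction from the noisy observation ω̃ := P_{W_m} u + η satisfies ‖u − u*(ω̃)‖ ≤ (ε(u, V_n, W_m) + ε_noise)/β, where ε(u, V_n, W_m) := inf{‖u − v‖ : v ∈ V_n + (W_m ∩ V_n^⊥)}. -/

import Mathlib

open Metric Submodule Filter

local notation "⟪" x ", " y "⟫" => @inner ℝ _ _ x y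

private lemma isComplete_inter_closed {α : Type*} [UniformSpace α] {s t : Set α}
    (hs : IsComplete s) (ht : IsClosed t) : IsComplete (s ∩ t) := by
  intro f hf hle
  have hles : f ≤ Filter.principal s :=
    hle.trans (Filter.principal_mono.2 Set.inter_subset_left)
  have hlet : f ≤ Filter.principal t :=
    hle.trans (Filter.principal_mono.2 Set.inter_subset_right)
  obtain ⟨x, hxs, hfx⟩ := hs f hf hles
  haveI : f.NeBot := hf.1
  have hxt : x ∈ t := by
    rw [← ht.closure_eq, mem_closure_iff_clusterPt]
    exact ClusterPt.mono (ClusterPt.of_le_nhds hfx) hlet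
  exact ⟨x, ⟨hxs, hxt⟩, hfx⟩

private lemma orthogonalProjection_eq_self_iff {V : Type*} [NormedAddCommGroup V]
    [InnerProductSpace ℝ V] {K : Submodule ℝ V} [K.HasOrthogonalProjection] {v : V} :
    (orthogonalProjection K v : V) = v ↔ v ∈ K :=
  Submodule.starProjection_eq_self_iff

private lemma inner_orthogonalProjection_left_eq_right {V : Type*} [NormedAddCommGroup V]
    [InnerProductSpace ℝ V] (K : Submodule ℝ V) [K.HasOrthogonalProjection] (u v : V) :
    ⟪(orthogonalProjection K u : V), v⟫ = ⟪u, (orthogonalProjection K v : V)⟫ :=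
  K.inner_starProjection_left_eq_right u v

private lemma orthogonalProjection_inner_eq_zero {V : Type*} [NormedAddCommGroup V]
    [InnerProductSpace ℝ V] {K : Submodule ℝ V} [K.HasOrthogonalProjection] (v w : V)
    (hw : w ∈ K) : ⟪v - (orthogonalProjection K v : V), w⟫ = 0 :=
  Submodule.starProjection_inner_eq_zero v w hw

set_option maxHeartbeats 2000000 in
/-- PBDW with noisy observations: if `ω̃ = P_{W_m} u + η` with `η ∈ W_m`,
`‖η‖ ≤ ε_noise`, then `‖u − u*(ω̃)‖ ≤ (ε(u, V_n, W_m) + ε_noise)/β`, where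
`ε(u, V_n, W_m) = inf {‖u − v‖ : v ∈ V_n + (W_m ∩ V_n^⊥)}` and
`u*(ω̃) = v*(ω̃) + ω̃ − P_{W_m} v*(ω̃)` with `v*(ω̃)` characterized by
`P_{V_n}(P_{W_m} v*(ω̃)) = P_{V_n} ω̃`. -/
theorem stmt5 {V : Type*} [NormedAddCommGroup V] [InnerProductSpace ℝ V]
    (Vn Wm : Submodule ℝ V) [FiniteDimensional ℝ Vn] [CompleteSpace Wm]
    (β : ℝ)
    (hβdef : β = sInf {r : ℝ | ∃ v ∈ Vn, v ≠ 0 ∧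
      r = ‖(Submodule.orthogonalProjectionOnto Wm v : V)‖ / ‖v‖})
    (hβ : 0 < β)
    (u η : V) (hη : η ∈ Wm) (εnoise : ℝ) (hηle : ‖η‖ ≤ εnoise)
    (vstar : Vn)
    (hvstar : Submodule.orthogonalProjectionOnto Vn ((Submodule.orthogonalProjectionOnto Wm (vstar : V) : V))
      = Submodule.orthogonalProjectionOnto Vn ((Submodule.orthogonalProjectionOnto Wm u : V) + η)) :
    ‖u - ((vstar : V) + ((Submodule.orthogonalProjectionOnto Wm u : V) + η)
        - (Submodule.orthogonalProjectionOnto Wm (vstar : V) : V))‖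
      ≤ (Metric.infDist u ((Vn ⊔ (Wm ⊓ Vnᗮ) : Submodule ℝ V) : Set V) + εnoise) / β := by
  have hε : (0:ℝ) ≤ εnoise := le_trans (norm_nonneg _) hηle
  set M : Submodule ℝ V := Wm ⊓ Vnᗮ with hM
  set K : Submodule ℝ V := Vn ⊔ M with hKdef
  -- completeness of M
  haveI : CompleteSpace M := by
    have h1 : IsComplete (Wm : Set V) := completeSpace_coe_iff_isComplete.1 ‹_›
    have h2 : IsClosed ((Vnᗮ : Submodule ℝ V) : Set V) := Submodule.isClosed_orthogonal Vn
    have h3 : (M : Set V) = (Wm : Set V) ∩ ((Vnᗮ : Submodule ℝ V) : Set V) := rfl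
    exact (h3 ▸ isComplete_inter_closed h1 h2).completeSpace_coe
  -- β is a lower bound for the ratios, and β ≤ 1
  have hbdd : BddBelow {r : ℝ | ∃ v ∈ Vn, v ≠ 0 ∧
      r = ‖(orthogonalProjection Wm v : V)‖ / ‖v‖} := by
    refine ⟨0, ?_⟩
    rintro r ⟨v, hv, hv0, rfl⟩
    positivity
  have hproj_le : ∀ x : V, ‖(orthogonalProjection Wm x : V)‖ ≤ ‖x‖ := by
    intro x
    calc ‖(orthogonalProjection Wm x : V)‖ = ‖orthogonalProjection Wm x‖ := rfl
      _ ≤ ‖orthogonalProjection Wm (E := V)‖ * ‖x‖ := (orthogonalProjection Wm).le_opNorm x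
      _ ≤ 1 * ‖x‖ := mul_le_mul_of_nonneg_right (orthogonalProjection_norm_le Wm) (norm_nonneg x)
      _ = ‖x‖ := one_mul _
  have hβle : ∀ v ∈ Vn, β * ‖v‖ ≤ ‖(orthogonalProjection Wm v : V)‖ := by
    intro v hv
    rcases eq_or_ne v 0 with rfl | hv0
    · simp
    · have hmem : ‖(orthogonalProjection Wm v : V)‖ / ‖v‖ ∈ {r : ℝ | ∃ v ∈ Vn, v ≠ 0 ∧
          r = ‖(orthogonalProjection Wm v : V)‖ / ‖v‖} := ⟨v, hv, hv0, rfl⟩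
      have := hβdef ▸ csInf_le hbdd hmem
      have hvn : (0:ℝ) < ‖v‖ := norm_pos_iff.2 hv0
      calc β * ‖v‖ ≤ ‖(orthogonalProjection Wm v : V)‖ / ‖v‖ * ‖v‖ := by
            exact mul_le_mul_of_nonneg_right this hvn.le
        _ = ‖(orthogonalProjection Wm v : V)‖ := by field_simp
  have hβ1 : β ≤ 1 := by
    have hne : {r : ℝ | ∃ v ∈ Vn, v ≠ 0 ∧
        r = ‖(orthogonalProjection Wm v : V)‖ / ‖v‖}.Nonempty := by
      by_contra h
      rw [Set.not_nonempty_iff_eq_empty] at h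
      rw [hβdef, h, Real.sInf_empty] at hβ
      exact lt_irrefl 0 hβ
    obtain ⟨r, v, hv, hv0, rfl⟩ := hne
    have hvn : (0:ℝ) < ‖v‖ := norm_pos_iff.2 hv0
    have h1 : ‖(orthogonalProjection Wm v : V)‖ / ‖v‖ ≤ 1 :=
      (div_le_one hvn).2 (hproj_le v)
    exact le_trans (hβdef ▸ csInf_le hbdd ⟨v, hv, hv0, rfl⟩) h1
  -- Lemma A : β‖k‖ ≤ ‖P_W k‖ for k ∈ K
  have hA : ∀ k ∈ K, β * ‖k‖ ≤ ‖(orthogonalProjection Wm k : V)‖ := by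
    intro x hx
    obtain ⟨v, hv, w, hw, rfl⟩ := Submodule.mem_sup.1 hx
    have hwW : w ∈ Wm := (inf_le_left : Wm ⊓ Vnᗮ ≤ Wm) hw
    have hwVn : w ∈ Vnᗮ := (inf_le_right : Wm ⊓ Vnᗮ ≤ Vnᗮ) hw
    have hPw : (orthogonalProjection Wm w : V) = w := orthogonalProjection_eq_self_iff.2 hwW
    have hP : (orthogonalProjection Wm (v + w) : V)
        = (orthogonalProjection Wm v : V) + w := by
      rw [map_add, Submodule.coe_add, hPw]
    have hvw : ⟪v, w⟫ = 0 := Submodule.inner_right_of_mem_orthogonal hv hwVn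
    have hPvw : ⟪(orthogonalProjection Wm v : V), w⟫ = 0 := by
      rw [inner_orthogonalProjection_left_eq_right, hPw]; exact hvw
    have h1 : ‖(orthogonalProjection Wm (v + w) : V)‖ ^ 2
        = ‖(orthogonalProjection Wm v : V)‖ ^ 2 + ‖w‖ ^ 2 := by
      rw [hP, norm_add_sq_real, hPvw]; ring
    have h2 : ‖v + w‖ ^ 2 = ‖v‖ ^ 2 + ‖w‖ ^ 2 := by
      rw [norm_add_sq_real, hvw]; ring
    have h3 : β * ‖v‖ ≤ ‖(orthogonalProjection Wm v : V)‖ := hβle v hv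
    have h3' : (β * ‖v‖) ^ 2 ≤ ‖(orthogonalProjection Wm v : V)‖ ^ 2 :=
      pow_le_pow_left₀ (by positivity) h3 2
    have h4 : β ^ 2 ≤ 1 := by nlinarith
    have h5 : (β * ‖v + w‖) ^ 2 ≤ ‖(orthogonalProjection Wm (v + w) : V)‖ ^ 2 := by
      nlinarith [sq_nonneg ‖w‖]
    exact le_of_pow_le_pow_left₀ two_ne_zero (norm_nonneg _) h5
  -- Lemma C : duality
  have hC : ∀ p ∈ Wm, (∀ w ∈ M, ⟪p, w⟫ = 0) →
      β * ‖p‖ ≤ ‖(orthogonalProjection Vn p : V)‖ := by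
    intro p hp hpM
    rcases eq_or_ne p 0 with rfl | hp0
    · simp
    have hpn : (0:ℝ) < ‖p‖ := norm_pos_iff.2 hp0
    -- the operator T = P_Vn ∘ P_Wm on Vn is injective, hence surjective
    let T : Vn →ₗ[ℝ] Vn :=
      { toFun := fun v => orthogonalProjection Vn ((orthogonalProjection Wm (v : V) : V))
        map_add' := by intro a b; simp [map_add]
        map_smul' := by intro c a; simp [map_smul] }
    have hT0 : ∀ a : Vn, T a = 0 → a = 0 := by
      intro a ha
      have hmem : (orthogonalProjection Wm (a : V) : V) ∈ Vnᗮ :=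
        orthogonalProjection_eq_zero_iff.1 ha
      have h1 : ⟪(a : V), (orthogonalProjection Wm (a : V) : V)⟫ = 0 :=
        Submodule.inner_right_of_mem_orthogonal (coe_mem a) hmem
      have h2 : ⟪(a : V) - (orthogonalProjection Wm (a : V) : V),
          (orthogonalProjection Wm (a : V) : V)⟫ = 0 :=
        orthogonalProjection_inner_eq_zero (a : V) _ (coe_mem _)
      rw [inner_sub_left, h1] at h2
      have h3 : ‖(orthogonalProjection Wm (a : V) : V)‖ ^ 2 = 0 := by
        rw [← real_inner_self_eq_norm_sq]; linarith
      have h4 : β * ‖(a : V)‖ ≤ 0 := by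
        have := hβle (a : V) (coe_mem a)
        nlinarith [norm_nonneg ((orthogonalProjection Wm (a : V) : V))]
      have h5 : ‖(a : V)‖ = 0 := by nlinarith [norm_nonneg (a : V)]
      exact Subtype.ext (norm_eq_zero.1 h5)
    have hTinj : Function.Injective T := by
      intro a b hab
      have := hT0 (a - b) (by rw [map_sub, hab, sub_self])
      exact sub_eq_zero.1 this
    obtain ⟨v, hv⟩ := (LinearMap.injective_iff_surjective.1 hTinj) (orthogonalProjection Vn p)
    have hvq : orthogonalProjection Vn ((orthogonalProjection Wm (v : V) : V))
        = orthogonalProjection Vn p := hv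
    set q : V := (orthogonalProjection Wm (v : V) : V) with hqdef
    have hpqM : p - q ∈ M := by
      refine Submodule.mem_inf.2 ⟨sub_mem hp (coe_mem _), ?_⟩
      rw [← orthogonalProjection_eq_zero_iff, map_sub, hvq, sub_self]
    have h1 : ⟪p, p - q⟫ = 0 := hpM _ hpqM
    have h2 : ⟪p, q⟫ = ‖p‖ ^ 2 := by
      rw [inner_sub_right, real_inner_self_eq_norm_sq] at h1; linarith
    have h3 : ⟪p, (v : V)⟫ = ‖p‖ ^ 2 := by
      have hPp : (orthogonalProjection Wm p : V) = p := orthogonalProjection_eq_self_iff.2 hp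
      have := inner_orthogonalProjection_left_eq_right Wm p (v : V)
      rw [hPp] at this
      rw [this]; exact h2
    have h4 : ⟪(v : V) - q, q⟫ = 0 :=
      orthogonalProjection_inner_eq_zero (v : V) q (coe_mem _)
    have h5 : ⟪(v : V), p - q⟫ = 0 :=
      Submodule.inner_right_of_mem_orthogonal (coe_mem v)
        ((inf_le_right : Wm ⊓ Vnᗮ ≤ Vnᗮ) hpqM)
    have h6 : ‖q‖ ^ 2 = ‖p‖ ^ 2 := by
      have e1 : ⟪(v : V), q⟫ = ‖q‖ ^ 2 := by
        rw [inner_sub_left, real_inner_self_eq_norm_sq] at h4; linarith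
      have e2 : ⟪(v : V), p⟫ = ⟪(v : V), q⟫ := by
        rw [inner_sub_right] at h5; linarith
      have e3 : ⟪(v : V), p⟫ = ‖p‖ ^ 2 := by rw [real_inner_comm]; exact h3
      linarith
    have h7 : ‖q‖ = ‖p‖ := by
      rw [← Real.sqrt_sq (norm_nonneg q), h6, Real.sqrt_sq (norm_nonneg p)]
    have h8 : β * ‖(v : V)‖ ≤ ‖p‖ := h7 ▸ hβle (v : V) (coe_mem v)
    have h9 : ⟪(orthogonalProjection Vn p : V), (v : V)⟫ = ‖p‖ ^ 2 := by
      have e1 : ⟪p - (orthogonalProjection Vn p : V), (v : V)⟫ = 0 :=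
        orthogonalProjection_inner_eq_zero p (v : V) (coe_mem v)
      rw [inner_sub_left] at e1
      linarith [h3, e1]
    have h10 : ‖p‖ ^ 2 ≤ ‖(orthogonalProjection Vn p : V)‖ * ‖(v : V)‖ :=
      h9 ▸ real_inner_le_norm _ _
    nlinarith [mul_le_mul_of_nonneg_left h10 hβ.le,
      mul_le_mul_of_nonneg_left h8 (norm_nonneg ((orthogonalProjection Vn p : V)))]
  -- the projection of u onto K, by hand
  set z : V := (orthogonalProjection Vn u : V) + (orthogonalProjection M u : V) with hz
  have hzK : z ∈ K := add_mem_sup (coe_mem _) (coe_mem _)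
  set y : V := u - z with hy
  have hyK : y ∈ Kᗮ := by
    rw [Submodule.mem_orthogonal]
    intro x hx
    obtain ⟨v, hv, w, hw, rfl⟩ := Submodule.mem_sup.1 hx
    have hMsub : M ≤ Vnᗮ := inf_le_right
    have h1 : ⟪v, y⟫ = 0 := by
      have e3 : y = (u - (orthogonalProjection Vn u : V)) - (orthogonalProjection M u : V) := by
        rw [hy, hz]; abel
      have e1 : ⟪u - (orthogonalProjection Vn u : V), v⟫ = 0 :=
        orthogonalProjection_inner_eq_zero u v hv
      have e2 : ⟪v, (orthogonalProjection M u : V)⟫ = 0 :=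
        Submodule.inner_right_of_mem_orthogonal hv (hMsub (coe_mem _))
      rw [e3, inner_sub_right, e2, sub_zero, real_inner_comm]
      exact e1
    have h2 : ⟪w, y⟫ = 0 := by
      have e4 : y = (u - (orthogonalProjection M u : V)) - (orthogonalProjection Vn u : V) := by
        rw [hy, hz]; abel
      have e1 : ⟪u - (orthogonalProjection M u : V), w⟫ = 0 :=
        orthogonalProjection_inner_eq_zero u w hw
      have e2 : ⟪w, (orthogonalProjection Vn u : V)⟫ = 0 :=
        Submodule.inner_left_of_mem_orthogonal (coe_mem _) (hMsub hw)
      rw [e4, inner_sub_right, e2, sub_zero, real_inner_comm]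
      exact e1
    rw [inner_add_left, h1, h2, add_zero]
  -- Lemma B : ‖P_W y‖ ≤ √(1-β²)‖y‖
  have hB : ‖(orthogonalProjection Wm y : V)‖ ≤ Real.sqrt (1 - β^2) * ‖y‖ := by
    have h1ββ : (0:ℝ) ≤ 1 - β^2 := by nlinarith
    set p : V := (orthogonalProjection Wm y : V) with hpdef
    have hpM : ∀ w ∈ M, ⟪p, w⟫ = 0 := by
      intro w hw
      have hwW : w ∈ Wm := (inf_le_left : Wm ⊓ Vnᗮ ≤ Wm) hw
      have h1 : (orthogonalProjection Wm w : V) = w := orthogonalProjection_eq_self_iff.2 hwW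
      rw [hpdef, inner_orthogonalProjection_left_eq_right, h1, real_inner_comm]
      exact hyK w (Submodule.mem_sup_right hw)
    have hCp : β * ‖p‖ ≤ ‖(orthogonalProjection Vn p : V)‖ := hC p (coe_mem _) hpM
    have h1 : ⟪y - p, p⟫ = 0 := orthogonalProjection_inner_eq_zero y p (coe_mem _)
    have h2 : ⟪y, p⟫ = ‖p‖^2 := by
      rw [inner_sub_left, real_inner_self_eq_norm_sq] at h1; linarith
    have h3 : ⟪y, (orthogonalProjection Vn p : V)⟫ = 0 := by
      rw [real_inner_comm]
      exact hyK _ (Submodule.mem_sup_left (coe_mem _))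
    have h4 : ⟪y, p - (orthogonalProjection Vn p : V)⟫ = ‖p‖^2 := by
      rw [inner_sub_right, h3, sub_zero]; exact h2
    have h5 : ⟪p - (orthogonalProjection Vn p : V), (orthogonalProjection Vn p : V)⟫ = 0 :=
      orthogonalProjection_inner_eq_zero p _ (coe_mem _)
    have h6 : ‖p - (orthogonalProjection Vn p : V)‖^2
        = ‖p‖^2 - ‖(orthogonalProjection Vn p : V)‖^2 := by
      have e : ⟪p, (orthogonalProjection Vn p : V)⟫
          = ‖(orthogonalProjection Vn p : V)‖^2 := by
        rw [inner_sub_left, real_inner_self_eq_norm_sq] at h5; linarith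
      rw [norm_sub_sq_real, e]; ring
    have h7 : ‖p - (orthogonalProjection Vn p : V)‖^2 ≤ (1 - β^2) * ‖p‖^2 := by
      have := pow_le_pow_left₀ (by positivity) hCp 2
      nlinarith
    have h8 : ‖p - (orthogonalProjection Vn p : V)‖ ≤ Real.sqrt (1 - β^2) * ‖p‖ := by
      calc ‖p - (orthogonalProjection Vn p : V)‖
          = Real.sqrt (‖p - (orthogonalProjection Vn p : V)‖^2) :=
            (Real.sqrt_sq (norm_nonneg _)).symm
        _ ≤ Real.sqrt ((1 - β^2) * ‖p‖^2) := Real.sqrt_le_sqrt h7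
        _ = Real.sqrt (1 - β^2) * ‖p‖ := by
            rw [Real.sqrt_mul h1ββ, Real.sqrt_sq (norm_nonneg _)]
    have h9 : ‖p‖^2 ≤ ‖y‖ * (Real.sqrt (1 - β^2) * ‖p‖) := by
      calc ‖p‖^2 = ⟪y, p - (orthogonalProjection Vn p : V)⟫ := h4.symm
        _ ≤ ‖y‖ * ‖p - (orthogonalProjection Vn p : V)‖ := real_inner_le_norm _ _
        _ ≤ ‖y‖ * (Real.sqrt (1 - β^2) * ‖p‖) :=
            mul_le_mul_of_nonneg_left h8 (norm_nonneg _)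
    rcases eq_or_lt_of_le (norm_nonneg p) with h0 | h0
    · rw [← h0]; positivity
    · nlinarith [h9]
  -- minimality of z
  set d : ℝ := Metric.infDist u (K : Set V) with hd
  have hyd : ‖y‖ ≤ d := by
    by_contra hcon
    push_neg at hcon
    obtain ⟨k', hk', hlt⟩ := (Metric.infDist_lt_iff ⟨0, K.zero_mem⟩).1 hcon
    rw [dist_eq_norm] at hlt
    have hzk : z - k' ∈ K := sub_mem hzK hk'
    have h0 : ⟪y, z - k'⟫ = 0 := by rw [real_inner_comm]; exact hyK _ hzk
    have he : u - k' = y + (z - k') := by rw [hy]; abel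
    have hsq : ‖u - k'‖^2 = ‖y‖^2 + ‖z - k'‖^2 := by
      rw [he, norm_add_sq_real, h0]; ring
    nlinarith [norm_nonneg (u - k'), norm_nonneg (z - k')]
  -- the reconstruction
  set ustar : V := (vstar : V) + ((orthogonalProjection Wm u : V) + η)
      - (orthogonalProjection Wm (vstar : V) : V) with hustar
  have hwstar : ((orthogonalProjection Wm u : V) + η)
      - (orthogonalProjection Wm (vstar : V) : V) ∈ M := by
    refine Submodule.mem_inf.2 ⟨sub_mem (add_mem (coe_mem _) hη) (coe_mem _), ?_⟩
    rw [← orthogonalProjection_eq_zero_iff, map_sub, ← hvstar, sub_self]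
  have hustarK : ustar ∈ K := by
    rw [hustar, add_sub_assoc]
    exact add_mem_sup (coe_mem vstar) hwstar
  set k : V := z - ustar with hk
  have hkK : k ∈ K := sub_mem hzK hustarK
  have hek : u - ustar = y + k := by rw [hy, hk]; abel
  have heyk : ‖u - ustar‖^2 = ‖y‖^2 + ‖k‖^2 := by
    have h0 : ⟪y, k⟫ = 0 := by rw [real_inner_comm]; exact hyK k hkK
    rw [hek, norm_add_sq_real, h0]; ring
  have hPk : (orthogonalProjection Wm k : V)
      = -(orthogonalProjection Wm y : V) - η := by
    have h1 : (orthogonalProjection Wm η : V) = η := orthogonalProjection_eq_self_iff.2 hη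
    have h2 : (orthogonalProjection Wm ((orthogonalProjection Wm u : V)) : V)
        = (orthogonalProjection Wm u : V) := orthogonalProjection_eq_self_iff.2 (coe_mem _)
    have h3 : (orthogonalProjection Wm ((orthogonalProjection Wm (vstar : V) : V)) : V)
        = (orthogonalProjection Wm (vstar : V) : V) :=
      orthogonalProjection_eq_self_iff.2 (coe_mem _)
    have h4 : (orthogonalProjection Wm ((orthogonalProjection M u : V)) : V)
        = (orthogonalProjection M u : V) :=
      orthogonalProjection_eq_self_iff.2 ((inf_le_left : Wm ⊓ Vnᗮ ≤ Wm) (coe_mem _))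
    rw [hk, hy, hz, hustar]
    simp only [map_sub, map_add, Submodule.coe_sub, Submodule.coe_add, h1, h2, h3, h4]
    abel
  have hkb : β * ‖k‖ ≤ Real.sqrt (1 - β^2) * ‖y‖ + εnoise := by
    calc β * ‖k‖ ≤ ‖(orthogonalProjection Wm k : V)‖ := hA k hkK
      _ = ‖(orthogonalProjection Wm y : V) + η‖ := by
            rw [hPk, show -(orthogonalProjection Wm y : V) - η
              = -((orthogonalProjection Wm y : V) + η) by abel, norm_neg]
      _ ≤ ‖(orthogonalProjection Wm y : V)‖ + ‖η‖ := norm_add_le _ _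
      _ ≤ Real.sqrt (1 - β^2) * ‖y‖ + εnoise := add_le_add hB hηle
  -- final algebra
  set s : ℝ := Real.sqrt (1 - β^2) with hs
  have hs0 : 0 ≤ s := Real.sqrt_nonneg _
  have hsq2 : s^2 = 1 - β^2 := Real.sq_sqrt (by nlinarith)
  have hs1 : s ≤ 1 := by nlinarith [hs0, sq_nonneg β]
  have h6 : (β * ‖k‖)^2 ≤ (s * ‖y‖ + εnoise)^2 := pow_le_pow_left₀ (by positivity) hkb 2
  have hd0 : 0 ≤ d := Metric.infDist_nonneg
  have heyk2 : (β * ‖u - ustar‖)^2 = β^2 * ‖y‖^2 + (β * ‖k‖)^2 := by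
    rw [mul_pow, heyk, mul_pow]; ring
  have hy2 : ‖y‖^2 ≤ d^2 := pow_le_pow_left₀ (norm_nonneg _) hyd 2
  have hcross : s * ‖y‖ * εnoise ≤ ‖y‖ * εnoise := by
    nlinarith [mul_nonneg (norm_nonneg y) hε, hs1]
  have hyε : ‖y‖ * εnoise ≤ d * εnoise := mul_le_mul_of_nonneg_right hyd hε
  have hs2y : s^2 * ‖y‖^2 = (1 - β^2) * ‖y‖^2 := by rw [hsq2]
  have h7 : (β * ‖u - ustar‖)^2 ≤ (d + εnoise)^2 := by
    nlinarith [heyk2, h6, hs2y, hcross, hyε, hy2]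
  have h8 : β * ‖u - ustar‖ ≤ d + εnoise :=
    le_of_pow_le_pow_left₀ two_ne_zero (by positivity) h7
  rw [le_div_iff₀ hβ, mul_comm]
  exact h8
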